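/- Assume H(A), H(B), H(J), H(f), H(u₀) and (H_s), and fix z ∈ V and g ∈ V*. Then the functional L(w) = ½⟨Aw,w⟩ + ⟨Bz − g, w⟩ + J(γz, γw) is coercive; more precisely, there exists c > 0 (depending on the data and on z, g) such that L(w) ≥ (½ m_A − m_{J1} c_γ²) ‖w‖_V² − c‖w‖_V − c for all w ∈ V, and since (H_s) gives ½ m_A − m_{J1} c_γ² > 0, L(w) → +∞ as ‖w‖_V → ∞. -/

import Mathlib

open Filter MeasureTheory Set
open Topology

noncomputable def clarkeDeriv {Y : Type*} [NormedAddCommGroup Y] [NormedSpace ℝ Y]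
    (φ : Y → ℝ) (y z : Y) : ℝ :=
  Filter.limsup (fun p : Y × ℝ => (φ (p.1 + p.2 • z) - φ p.1) / p.2)
    ((nhds y) ×ˢ (nhdsWithin 0 (Set.Ioi 0)))

def clarkeSubdiff {Y : Type*} [NormedAddCommGroup Y] [NormedSpace ℝ Y]
    (φ : Y → ℝ) (y : Y) : Set (Y →L[ℝ] ℝ) :=
  {ξ | ∀ z, ξ z ≤ clarkeDeriv φ y z}

/-- The functional `L(w) = ½⟨Aw,w⟩ + ⟨Bz − g, w⟩ + J(γz, γw)`. -/
noncomputable def Lfun {V X : Type*} [NormedAddCommGroup V] [NormedSpace ℝ V]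
    [NormedAddCommGroup X] [NormedSpace ℝ X]
    (γ : V →L[ℝ] X) (A : V →L[ℝ] V →L[ℝ] ℝ) (B : V → V →L[ℝ] ℝ)
    (J : X → X → ℝ) (z : V) (g : V →L[ℝ] ℝ) (w : V) : ℝ :=
  (1 / 2) * A w w + (B z - g) w + J (γ z) (γ w)

section Aux

lemma map_mul_nhdsWithin_Ioi {t : ℝ} (ht : 0 < t) :
    Filter.map (fun s : ℝ => t * s) (𝓝[>] (0:ℝ)) = 𝓝[>] (0:ℝ) := by
  have A : Tendsto (fun s : ℝ => t * s) (𝓝[>] (0:ℝ)) (𝓝[>] (0:ℝ)) := by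
    apply tendsto_nhdsWithin_of_tendsto_nhds_of_eventually_within
    · have : Tendsto (fun s : ℝ => t * s) (𝓝 (0:ℝ)) (𝓝 (t * 0)) :=
        (continuous_const.mul continuous_id).tendsto 0
      simpa using this.mono_left nhdsWithin_le_nhds
    · filter_upwards [self_mem_nhdsWithin] with s hs
      exact mul_pos ht hs
  have B : Tendsto (fun s : ℝ => t⁻¹ * s) (𝓝[>] (0:ℝ)) (𝓝[>] (0:ℝ)) := by
    apply tendsto_nhdsWithin_of_tendsto_nhds_of_eventually_within
    · have : Tendsto (fun s : ℝ => t⁻¹ * s) (𝓝 (0:ℝ)) (𝓝 (t⁻¹ * 0)) :=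
        (continuous_const.mul continuous_id).tendsto 0
      simpa using this.mono_left nhdsWithin_le_nhds
    · filter_upwards [self_mem_nhdsWithin] with s hs
      exact mul_pos (inv_pos.mpr ht) hs
  refine le_antisymm A ?_
  have h3 : Filter.map (fun s : ℝ => t * s) (Filter.map (fun s : ℝ => t⁻¹ * s) (𝓝[>] (0:ℝ)))
      ≤ Filter.map (fun s : ℝ => t * s) (𝓝[>] (0:ℝ)) := Filter.map_mono B
  have h4 : ((fun s : ℝ => t * s) ∘ fun s : ℝ => t⁻¹ * s) = id := by
    funext s; simp [Function.comp, ← mul_assoc, mul_inv_cancel₀ ht.ne']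
  rwa [Filter.map_map, h4, Filter.map_id] at h3


variable {X : Type*} [NormedAddCommGroup X] [NormedSpace ℝ X]

/-- The difference quotient appearing in `clarkeDeriv`. -/
noncomputable def cq (φ : X → ℝ) (z : X) (p : X × ℝ) : ℝ :=
  (φ (p.1 + p.2 • z) - φ p.1) / p.2

lemma clarkeDeriv_eq (φ : X → ℝ) (y z : X) :
    clarkeDeriv φ y z = Filter.limsup (cq φ z) ((𝓝 y) ×ˢ (𝓝[>] (0:ℝ))) := rfl

lemma cq_bound {φ : X → ℝ} (hφ : LocallyLipschitz φ) (y : X) :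
    ∃ K : ℝ, 0 ≤ K ∧ ∀ z : X, ∀ᶠ p in (𝓝 y) ×ˢ (𝓝[>] (0:ℝ)), |cq φ z p| ≤ K * ‖z‖ := by
  obtain ⟨K, U, hU, hK⟩ := hφ y
  obtain ⟨r, hr, hball⟩ := Metric.mem_nhds_iff.mp hU
  refine ⟨K, K.coe_nonneg, fun z => ?_⟩
  have hδ : 0 < r / (2 * (‖z‖ + 1)) := by positivity
  have h1 : ∀ᶠ x in 𝓝 y, x ∈ Metric.ball y (r / 2) := Metric.ball_mem_nhds y (by linarith)
  have h2 : ∀ᶠ t in 𝓝[>] (0:ℝ), t ∈ Set.Ioo 0 (r / (2 * (‖z‖ + 1))) :=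
    Ioo_mem_nhdsGT hδ
  filter_upwards [h1.prod_mk h2] with p hp
  have hp1 : dist p.1 y < r / 2 := hp.1
  have hp2a : 0 < p.2 := hp.2.1
  have hp2b : p.2 < r / (2 * (‖z‖ + 1)) := hp.2.2
  have hz1 : p.2 * ‖z‖ ≤ r / 2 := by
    have h3 : p.2 * ‖z‖ ≤ (r / (2 * (‖z‖ + 1))) * (‖z‖ + 1) := by
      have := norm_nonneg z
      nlinarith
    have h4 : (r / (2 * (‖z‖ + 1))) * (‖z‖ + 1) = r / 2 := by
      field_simp
    linarith [h3, h4.le]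
  have hmem1 : p.1 ∈ U := hball (by
    simp only [Metric.mem_ball]; linarith)
  have hmem2 : p.1 + p.2 • z ∈ U := hball (by
    simp only [Metric.mem_ball]
    have : dist (p.1 + p.2 • z) y ≤ ‖p.2 • z‖ + dist p.1 y := by
      rw [dist_eq_norm, dist_eq_norm]
      have : p.1 + p.2 • z - y = p.2 • z + (p.1 - y) := by abel
      rw [this]
      exact norm_add_le _ _
    have hns : ‖p.2 • z‖ = p.2 * ‖z‖ := by
      rw [norm_smul, Real.norm_eq_abs, abs_of_pos hp2a]
    linarith)
  have hd : dist (φ (p.1 + p.2 • z)) (φ p.1) ≤ K * dist (p.1 + p.2 • z) p.1 :=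
    hK.dist_le_mul _ hmem2 _ hmem1
  have hd2 : dist (p.1 + p.2 • z) p.1 = p.2 * ‖z‖ := by
    rw [dist_eq_norm, add_sub_cancel_left, norm_smul, Real.norm_eq_abs, abs_of_pos hp2a]
  rw [hd2, Real.dist_eq] at hd
  have : |cq φ z p| = |φ (p.1 + p.2 • z) - φ p.1| / p.2 := by
    rw [cq, abs_div, abs_of_pos hp2a]
  rw [this, div_le_iff₀ hp2a]
  calc |φ (p.1 + p.2 • z) - φ p.1| ≤ K * (p.2 * ‖z‖) := hd
    _ = K * ‖z‖ * p.2 := by ring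


lemma cq_isBoundedUnder_le {φ : X → ℝ} (hφ : LocallyLipschitz φ) (y z : X) :
    ((𝓝 y) ×ˢ (𝓝[>] (0:ℝ))).IsBoundedUnder (· ≤ ·) (cq φ z) := by
  obtain ⟨K, _, hK⟩ := cq_bound hφ y
  exact ⟨K * ‖z‖, by simpa [Filter.eventually_map] using (hK z).mono fun p hp => (abs_le.mp hp).2⟩

lemma cq_isBoundedUnder_ge {φ : X → ℝ} (hφ : LocallyLipschitz φ) (y z : X) :
    ((𝓝 y) ×ˢ (𝓝[>] (0:ℝ))).IsBoundedUnder (· ≥ ·) (cq φ z) := by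
  obtain ⟨K, _, hK⟩ := cq_bound hφ y
  exact ⟨-(K * ‖z‖), by simpa [Filter.eventually_map] using (hK z).mono fun p hp => (abs_le.mp hp).1⟩

lemma abs_clarkeDeriv_le {φ : X → ℝ} (hφ : LocallyLipschitz φ) (y : X) :
    ∃ K : ℝ, 0 ≤ K ∧ ∀ z : X, |clarkeDeriv φ y z| ≤ K * ‖z‖ := by
  obtain ⟨K, hK0, hK⟩ := cq_bound hφ y
  refine ⟨K, hK0, fun z => ?_⟩
  have hub : ∀ᶠ p in (𝓝 y) ×ˢ (𝓝[>] (0:ℝ)), cq φ z p ≤ K * ‖z‖ :=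
    (hK z).mono fun p hp => (abs_le.mp hp).2
  have hlb : ∀ᶠ p in (𝓝 y) ×ˢ (𝓝[>] (0:ℝ)), -(K * ‖z‖) ≤ cq φ z p :=
    (hK z).mono fun p hp => (abs_le.mp hp).1
  have hbdd : ((𝓝 y) ×ˢ (𝓝[>] (0:ℝ))).IsBoundedUnder (· ≤ ·) (cq φ z) :=
    ⟨K * ‖z‖, by simpa [Filter.eventually_map] using hub⟩
  have hbdd' : ((𝓝 y) ×ˢ (𝓝[>] (0:ℝ))).IsBoundedUnder (· ≥ ·) (cq φ z) :=
    ⟨-(K * ‖z‖), by simpa [Filter.eventually_map] using hlb⟩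
  rw [clarkeDeriv_eq]
  exact abs_le.mpr ⟨le_limsup_of_frequently_le hlb.frequently hbdd,
    Filter.limsup_le_of_le hbdd'.isCoboundedUnder_le hub⟩

lemma clarkeDeriv_smul {φ : X → ℝ} (hφ : LocallyLipschitz φ) (y z : X) {t : ℝ} (ht : 0 < t) :
    clarkeDeriv φ y (t • z) = t * clarkeDeriv φ y z := by
  have hmap : Filter.map (fun p : X × ℝ => (p.1, t * p.2)) ((𝓝 y) ×ˢ (𝓝[>] (0:ℝ)))
      = (𝓝 y) ×ˢ (𝓝[>] (0:ℝ)) := by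
    have h1 := Filter.prod_map_map_eq (f₁ := 𝓝 y) (f₂ := 𝓝[>] (0:ℝ))
      (m₁ := (id : X → X)) (m₂ := fun s : ℝ => t * s)
    rw [Filter.map_id, map_mul_nhdsWithin_Ioi ht] at h1
    have h2 : (fun p : X × ℝ => (p.1, t * p.2)) = Prod.map (id : X → X) (fun s : ℝ => t * s) := rfl
    rw [h2]; exact h1.symm
  have hfun : cq φ (t • z) = ((fun x : ℝ => t * x) ∘ (cq φ z)) ∘ (fun p : X × ℝ => (p.1, t * p.2)) := by
    funext p
    simp only [cq, Function.comp]
    have h1 : p.2 • (t • z) = (t * p.2) • z := by rw [smul_smul, mul_comm]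
    rw [h1, mul_div_assoc', mul_div_mul_left _ _ ht.ne']
  rw [clarkeDeriv_eq, clarkeDeriv_eq, hfun]
  rw [Filter.limsup_comp ((fun x : ℝ => t * x) ∘ (cq φ z)) (fun p : X × ℝ => (p.1, t * p.2)), hmap]
  have hmono : Monotone (fun x : ℝ => t * x) := fun a b hab => mul_le_mul_of_nonneg_left hab ht.le
  exact (hmono.map_limsup_of_continuousAt (F := (𝓝 y) ×ˢ (𝓝[>] (0:ℝ))) (cq φ z)
    ((continuous_const.mul continuous_id).continuousAt)
    (cq_isBoundedUnder_le hφ y z)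
    ((cq_isBoundedUnder_ge hφ y z).isCoboundedUnder_le)).symm

lemma clarkeDeriv_step {φ : X → ℝ} (hφ : LocallyLipschitz φ) (y z : X) {b δ : ℝ}
    (hδ : 0 < δ) (hb : clarkeDeriv φ y z < b) :
    ∃ l : ℝ, 0 < l ∧ l < δ ∧ (φ (y + l • z) - φ y) / l < b := by
  have hev : ∀ᶠ p in (𝓝 y) ×ˢ (𝓝[>] (0:ℝ)), cq φ z p < b := by
    apply eventually_lt_of_limsup_lt _ (cq_isBoundedUnder_le hφ y z)
    rw [← clarkeDeriv_eq]; exact hb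
  obtain ⟨U, hU, W, hW, hUW⟩ := Filter.mem_prod_iff.mp hev
  have hne : (W ∩ Set.Ioo 0 δ).Nonempty :=
    Filter.nonempty_of_mem (Filter.inter_mem hW (Ioo_mem_nhdsGT hδ))
  obtain ⟨l, hlW, hl0, hlδ⟩ := hne
  exact ⟨l, hl0, hlδ, hUW (Set.mk_mem_prod (mem_of_mem_nhds hU) hlW)⟩

lemma clarkeDeriv_descent {φ : X → ℝ} (hφ : LocallyLipschitz φ) (v : X) {M : ℝ}
    (hM : ∀ t ∈ Set.Icc (0:ℝ) 1, clarkeDeriv φ (t • v) (-v) ≤ M) :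
    φ 0 - φ v ≤ M := by
  refine le_of_forall_pos_le_add fun ε hε => ?_
  set A : Set ℝ := Set.Icc (0:ℝ) 1 ∩ {s | φ ((1 - s) • v) - φ v ≤ (M + ε) * s} with hA
  have h0A : (0:ℝ) ∈ A := by
    constructor
    · exact ⟨le_refl 0, zero_le_one⟩
    · simp [one_smul]
  have hAbdd : BddAbove A := ⟨1, fun s hs => hs.1.2⟩
  have hclosed : IsClosed A := by
    apply IsClosed.inter isClosed_Icc
    have hc1 : Continuous fun s : ℝ => φ ((1 - s) • v) - φ v :=
      (hφ.continuous.comp (by continuity)).sub continuous_const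
    exact isClosed_le hc1 (by continuity)
  set s₀ := sSup A with hs₀
  have hs₀A : s₀ ∈ A := hclosed.csSup_mem ⟨0, h0A⟩ hAbdd
  have hs₀0 : 0 ≤ s₀ := hs₀A.1.1
  have hs₀1 : s₀ ≤ 1 := hs₀A.1.2
  have hfin : s₀ = 1 := by
    by_contra hne
    have hlt : s₀ < 1 := lt_of_le_of_ne hs₀1 hne
    have hcd : clarkeDeriv φ ((1 - s₀) • v) (-v) ≤ M :=
      hM (1 - s₀) ⟨by linarith, by linarith⟩
    obtain ⟨l, hl0, hlδ, hq⟩ := clarkeDeriv_step (b := M + ε) hφ ((1 - s₀) • v) (-v)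
      (sub_pos.mpr hlt) (lt_of_le_of_lt hcd (by linarith))
    have hpt : (1 - s₀) • v + l • (-v) = (1 - (s₀ + l)) • v := by
      rw [smul_neg, ← sub_eq_add_neg, ← sub_smul]
      congr 1
      ring
    have hstep : φ ((1 - (s₀ + l)) • v) - φ ((1 - s₀) • v) < (M + ε) * l := by
      rw [← hpt]
      exact (div_lt_iff₀ hl0).mp hq
    have hmem : s₀ + l ∈ A := by
      refine ⟨⟨by linarith, by linarith⟩, ?_⟩
      have := hs₀A.2
      simp only [Set.mem_setOf_eq] at this ⊢
      nlinarith
    have := le_csSup hAbdd hmem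
    linarith
  have := hs₀A.2
  rw [hfin] at this
  simp only [sub_self, zero_smul, Set.mem_setOf_eq, mul_one] at this
  linarith


end Aux

/-- `L` is coercive: `L(w) ≥ (½m_A − m_{J1}c_γ²)‖w‖² − c‖w‖ − c`,
where `(H_s)` gives `½m_A − m_{J1}c_γ² > 0`, so `L(w) → +∞` as `‖w‖ → ∞`. -/
theorem Lfun_coercive
    {V X : Type*}
    [NormedAddCommGroup V] [NormedSpace ℝ V] [CompleteSpace V]
    [NormedAddCommGroup X] [NormedSpace ℝ X] [CompleteSpace X]
    -- V reflexive
    (hrefl : Function.Surjective (NormedSpace.inclusionInDoubleDual ℝ V))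
    (γ : V →L[ℝ] X)
    -- H(A)
    (A : V →L[ℝ] V →L[ℝ] ℝ)
    (hAsym : ∀ u v : V, A u v = A v u)
    (mA : ℝ) (hmA : 0 < mA)
    (hAco : ∀ u : V, mA * ‖u‖ ^ 2 ≤ A u u)
    -- H(B)
    (B : V → V →L[ℝ] ℝ)
    (LB : ℝ) (hLB : 0 < LB)
    (hB : ∀ v w : V, ‖B v - B w‖ ≤ LB * ‖v - w‖)
    -- H(J)
    (J : X → X → ℝ)
    (hJa : ∀ w : X, LocallyLipschitz (J w))
    (c₀ c₁ c₂ : ℝ) (hc₀ : 0 ≤ c₀) (hc₁ : 0 ≤ c₁) (hc₂ : 0 ≤ c₂)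
    (hJb : ∀ w v : X, ∀ ξ ∈ clarkeSubdiff (J w) v, ‖ξ‖ ≤ c₀ + c₁ * ‖w‖ + c₂ * ‖v‖)
    (mJ1 mJ2 : ℝ) (hmJ1 : 0 ≤ mJ1) (hmJ2 : 0 ≤ mJ2)
    (hJc : ∀ w₁ w₂ v₁ v₂ : X,
      clarkeDeriv (J w₁) v₁ (v₂ - v₁) + clarkeDeriv (J w₂) v₂ (v₁ - v₂) ≤
        mJ1 * ‖v₁ - v₂‖ ^ 2 + mJ2 * ‖w₁ - w₂‖ * ‖v₁ - v₂‖)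
    -- H(f)
    (T : ℝ) (hT : 0 < T)
    (f : ℝ → V →L[ℝ] ℝ) (hf : ContinuousOn f (Set.Icc 0 T))
    -- H(u₀)
    (u₀ : V)
    -- (H_s)
    (hs : 0 < mA - 2 * mJ1 * ‖γ‖ ^ 2)
    (z : V) (g : V →L[ℝ] ℝ) :
    0 < (1 / 2) * mA - mJ1 * ‖γ‖ ^ 2 ∧
    ∃ c : ℝ, 0 < c ∧
      (∀ w : V, ((1 / 2) * mA - mJ1 * ‖γ‖ ^ 2) * ‖w‖ ^ 2 - c * ‖w‖ - c ≤
        Lfun γ A B J z g w) ∧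
      Filter.Tendsto (Lfun γ A B J z g)
        (Filter.comap (fun w : V => ‖w‖) Filter.atTop) Filter.atTop := by
  have ha : 0 < (1 / 2) * mA - mJ1 * ‖γ‖ ^ 2 := by linarith
  refine ⟨ha, ?_⟩
  have hφ : LocallyLipschitz (J (γ z)) := hJa (γ z)
  obtain ⟨K, hK0, hKb⟩ := abs_clarkeDeriv_le hφ 0
  have key : ∀ v : X, J (γ z) 0 - (mJ1 * ‖v‖ ^ 2 + K * ‖v‖) ≤ J (γ z) v := by
    intro v
    have hnn : 0 ≤ mJ1 * ‖v‖ ^ 2 := by positivity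
    have hKv : |clarkeDeriv (J (γ z)) 0 (-v)| ≤ K * ‖v‖ := by simpa using hKb (-v)
    have hKv2 : |clarkeDeriv (J (γ z)) 0 v| ≤ K * ‖v‖ := hKb v
    have hdes : J (γ z) 0 - J (γ z) v ≤ mJ1 * ‖v‖ ^ 2 + K * ‖v‖ := by
      apply clarkeDeriv_descent hφ v
      intro t ht
      rcases eq_or_lt_of_le ht.1 with h0 | h0
      · rw [← h0, zero_smul]
        linarith [(abs_le.mp hKv).2]
      · have hJ := hJc (γ z) (γ z) (t • v) 0
        simp only [zero_sub, sub_zero, sub_self, norm_zero, mul_zero, zero_mul, add_zero] at hJ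
        have e1 : -(t • v) = t • (-v) := (smul_neg t v).symm
        rw [e1, clarkeDeriv_smul hφ _ _ h0, clarkeDeriv_smul hφ _ _ h0] at hJ
        have e2 : ‖t • v‖ = t * ‖v‖ := by
          rw [norm_smul, Real.norm_eq_abs, abs_of_pos h0]
        rw [e2] at hJ
        have h4 : t * (clarkeDeriv (J (γ z)) (t • v) (-v) + clarkeDeriv (J (γ z)) 0 v)
            ≤ t * (mJ1 * t * ‖v‖ ^ 2) := by nlinarith [hJ]
        have h3 := (mul_le_mul_iff_right₀ h0).mp h4
        have h5 : mJ1 * t * ‖v‖ ^ 2 ≤ mJ1 * ‖v‖ ^ 2 := by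
          nlinarith [mul_nonneg (sub_nonneg.mpr ht.2) hnn]
        linarith [(abs_le.mp hKv2).1]
    linarith
  have hbound : ∀ w : V,
      ((1 / 2) * mA - mJ1 * ‖γ‖ ^ 2) * ‖w‖ ^ 2
        - (‖B z - g‖ + K * ‖γ‖ + |J (γ z) 0| + 1) * ‖w‖
        - (‖B z - g‖ + K * ‖γ‖ + |J (γ z) 0| + 1) ≤ Lfun γ A B J z g w := by
    intro w
    have hA1 := hAco w
    have habs : |(B z - g) w| ≤ ‖B z - g‖ * ‖w‖ := by
      rw [← Real.norm_eq_abs]; exact (B z - g).le_opNorm w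
    have hB1 : -(‖B z - g‖ * ‖w‖) ≤ (B z - g) w := by linarith [(abs_le.mp habs).1]
    have hg1 : ‖γ w‖ ≤ ‖γ‖ * ‖w‖ := γ.le_opNorm w
    have hsq : ‖γ w‖ ^ 2 ≤ ‖γ‖ ^ 2 * ‖w‖ ^ 2 := by
      nlinarith [norm_nonneg (γ w), norm_nonneg w, norm_nonneg γ]
    have hphi := key (γ w)
    have h6 : mJ1 * ‖γ w‖ ^ 2 ≤ mJ1 * (‖γ‖ ^ 2 * ‖w‖ ^ 2) := mul_le_mul_of_nonneg_left hsq hmJ1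
    have h7 : K * ‖γ w‖ ≤ K * (‖γ‖ * ‖w‖) := mul_le_mul_of_nonneg_left hg1 hK0
    have h8 : -|J (γ z) 0| ≤ J (γ z) 0 := neg_abs_le _
    have h9 : 0 ≤ |J (γ z) 0| * ‖w‖ := by positivity
    have h10 : 0 ≤ ‖w‖ := norm_nonneg w
    have hBn : 0 ≤ ‖B z - g‖ := norm_nonneg _
    have hKG : 0 ≤ K * ‖γ‖ := mul_nonneg hK0 (norm_nonneg _)
    simp only [Lfun]
    linarith [hA1, hB1, hphi, h6, h7, h8, h9, h10, hBn, hKG]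
  refine ⟨‖B z - g‖ + K * ‖γ‖ + |J (γ z) 0| + 1, by positivity, hbound, ?_⟩
  have hcomp : Tendsto (fun w : V => ‖w‖)
      (Filter.comap (fun w : V => ‖w‖) Filter.atTop) Filter.atTop := tendsto_comap
  set c' : ℝ := ‖B z - g‖ + K * ‖γ‖ + |J (γ z) 0| + 1 with hc'
  have h1 : Tendsto (fun s : ℝ => ((1 / 2) * mA - mJ1 * ‖γ‖ ^ 2) * s) atTop atTop :=
    Tendsto.const_mul_atTop ha tendsto_id
  have h2 : Tendsto (fun s : ℝ => ((1 / 2) * mA - mJ1 * ‖γ‖ ^ 2) * s - c') atTop atTop := by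
    simpa [sub_eq_add_neg] using tendsto_atTop_add_const_right atTop (-c') h1
  have h3 : Tendsto (fun s : ℝ => s * (((1 / 2) * mA - mJ1 * ‖γ‖ ^ 2) * s - c')) atTop atTop :=
    tendsto_id.atTop_mul_atTop₀ h2
  have h4 : Tendsto (fun s : ℝ => s * (((1 / 2) * mA - mJ1 * ‖γ‖ ^ 2) * s - c') - c')
      atTop atTop := by
    simpa [sub_eq_add_neg] using tendsto_atTop_add_const_right atTop (-c') h3
  have h5 : Tendsto (fun s : ℝ => ((1 / 2) * mA - mJ1 * ‖γ‖ ^ 2) * s ^ 2 - c' * s - c')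
      atTop atTop := h4.congr (fun s => by ring)
  have hmono := fun w : V => hbound w
  exact tendsto_atTop_mono hmono (h5.comp hcomp)
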